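/- For N ≥ 2, λ > 0, L > 0, the identity 1/(cosh(√(2λ)L) + (N-1)sinh(√(2λ)L)) = Σ_{n=0}^∞ (2/N)(1 - 2/N)^n e^{-(2n+1)√(2λ)L} holds, the series converging absolutely. -/

import Mathlib

open Real

/-- For `N ≥ 2`, `λ > 0`, `L > 0`:
`1/(cosh(√(2λ)L) + (N-1)sinh(√(2λ)L)) = Σ_{n≥0} (2/N)(1 - 2/N)^n e^{-(2n+1)√(2λ)L}`,
and the series converges absolutely. -/
theorem spider_hitting_laplace_geometric_series (N : ℕ) (hN : 2 ≤ N) (lam L : ℝ)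
    (hlam : 0 < lam) (hL : 0 < L) :
    1 / (Real.cosh (Real.sqrt (2*lam) * L)
        + (N - 1 : ℝ) * Real.sinh (Real.sqrt (2*lam) * L)) =
      (∑' n : ℕ, (2 / N) * (1 - 2 / N)^n *
        Real.exp (-((2 * n + 1 : ℝ) * (Real.sqrt (2*lam) * L)))) ∧
      Summable (fun n : ℕ => |(2 / N) * (1 - 2 / N : ℝ)^n *
        Real.exp (-((2 * n + 1 : ℝ) * (Real.sqrt (2*lam) * L)))|) := by
  set x : ℝ := Real.sqrt (2*lam) * L with hxdef
  have hx : 0 < x := mul_pos (Real.sqrt_pos.mpr (by linarith)) hL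
  have hNpos : (0:ℝ) < N := by positivity
  have hN2 : (2:ℝ) ≤ (N:ℝ) := by exact_mod_cast hN
  have hq0 : (0:ℝ) ≤ 1 - 2 / N := by
    rw [sub_nonneg, div_le_one hNpos]; exact hN2
  have hq1 : 1 - 2 / (N:ℝ) < 1 := by
    have : (0:ℝ) < 2 / N := by positivity
    linarith
  set r : ℝ := (1 - 2 / N) * Real.exp (-(2*x)) with hrdef
  have hr0 : 0 ≤ r := mul_nonneg hq0 (Real.exp_nonneg _)
  have hr1 : r < 1 := by
    have he : Real.exp (-(2*x)) < 1 := Real.exp_lt_one_iff.mpr (by linarith)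
    have he0 : 0 < Real.exp (-(2*x)) := Real.exp_pos _
    calc r ≤ 1 * Real.exp (-(2*x)) := by
            apply mul_le_mul_of_nonneg_right (by linarith) (le_of_lt he0)
      _ < 1 := by simpa using he
  have hterm : ∀ n : ℕ, (2 / N) * (1 - 2 / N : ℝ)^n *
      Real.exp (-((2 * n + 1 : ℝ) * x)) = ((2 / N) * Real.exp (-x)) * r ^ n := by
    intro n
    have : (-((2 * (n:ℝ) + 1) * x)) = (-x) + (n:ℝ) * (-(2*x)) := by ring
    rw [this, Real.exp_add, hrdef, mul_pow, ← Real.exp_nat_mul]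
    ring
  have habs : |r| < 1 := by rw [abs_of_nonneg hr0]; exact hr1
  have hsumgeo : Summable (fun n : ℕ => r ^ n) := summable_geometric_of_lt_one hr0 hr1
  have hsum : Summable (fun n : ℕ => (2 / N) * (1 - 2 / N : ℝ)^n *
      Real.exp (-((2 * n + 1 : ℝ) * x))) := by
    simp only [hterm]; exact hsumgeo.mul_left _
  have htermnn : ∀ n : ℕ, 0 ≤ (2 / N) * (1 - 2 / N : ℝ)^n *
      Real.exp (-((2 * n + 1 : ℝ) * x)) := by
    intro n
    exact mul_nonneg (mul_nonneg (by positivity) (pow_nonneg hq0 n)) (Real.exp_nonneg _)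
  have hE1 : 1 < Real.exp x := by nlinarith [Real.add_one_le_exp x]
  have hE0 : (0:ℝ) < Real.exp x := Real.exp_pos x
  have hexne : Real.exp x ≠ 0 := hE0.ne'
  have hNne : (N:ℝ) ≠ 0 := hNpos.ne'
  have hA : (0:ℝ) < (N:ℝ) * (Real.exp x)^2 - ((N:ℝ) - 2) := by
    have hsq : 1 < (Real.exp x)^2 := by nlinarith
    have := mul_lt_mul_of_pos_left hsq hNpos
    linarith
  have hAne : (N:ℝ) * (Real.exp x)^2 - ((N:ℝ) - 2) ≠ 0 := hA.ne'
  have h2x : Real.exp (-(2*x)) = ((Real.exp x)^2)⁻¹ := by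
    rw [Real.exp_neg]
    congr 1
    rw [two_mul, Real.exp_add, sq]
  have hDval : Real.cosh x + ((N:ℝ) - 1) * Real.sinh x
      = ((N:ℝ) * (Real.exp x)^2 - ((N:ℝ) - 2)) / (2 * Real.exp x) := by
    rw [Real.cosh_eq, Real.sinh_eq, Real.exp_neg]
    field_simp
    ring
  have h1rval : 1 - r = ((N:ℝ) * (Real.exp x)^2 - ((N:ℝ) - 2)) / ((N:ℝ) * (Real.exp x)^2) := by
    rw [hrdef, h2x]
    field_simp
  constructor
  · have htsum : (∑' n : ℕ, (2 / N) * (1 - 2 / N : ℝ)^n *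
        Real.exp (-((2 * n + 1 : ℝ) * x))) = ((2 / N) * Real.exp (-x)) * (1 - r)⁻¹ := by
      simp only [hterm]
      rw [tsum_mul_left, tsum_geometric_of_lt_one hr0 hr1]
    rw [htsum, hDval, h1rval, Real.exp_neg]
    rw [one_div_div, inv_div]
    field_simp
  · exact hsum.abs
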